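/- (Theorem 4.3, uniform convergence of random graph embeddings) Let (X, d) be a metric space admitting, for every ε > 0, an ε-covering of cardinality at most (1 + 2/ε)^{dM}. Let μ be a probability measure on X, γ > 0, k(x,y) = E_{ω∼μ}[exp(-γ(d(x,ω)+d(ω,y)))], and k̃(x,y) = (1/R)Σᵢ exp(-γ(d(x,ωᵢ)+d(ωᵢ,y))) for i.i.d. ω₁,…,ω_R ∼ μ. Then for every ε > 0: P( sup_{x,y∈X} |k(x,y) - k̃(x,y)| ≤ ε ) ≥ 1 - 2·(1 + 16γ/ε)^{2dM}·exp(-R ε²/8). -/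

import Mathlib

open MeasureTheory ProbabilityTheory
open scoped ENNReal

section Aux
open Real

lemma aux_explip {a b : ℝ} (ha : a ≤ 0) (hb : b ≤ 0) :
    |Real.exp a - Real.exp b| ≤ |a - b| := by
  have key : ∀ a b : ℝ, a ≤ 0 → b ≤ a → Real.exp a - Real.exp b ≤ a - b := by
    intro a b ha hba
    have h1 : (b - a) + 1 ≤ Real.exp (b - a) := Real.add_one_le_exp _
    have h2 : Real.exp b = Real.exp a * Real.exp (b - a) := by
      rw [← Real.exp_add]; ring_nf
    have h3 : Real.exp a ≤ 1 := Real.exp_le_one_iff.mpr ha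
    have h4 : Real.exp (b - a) ≤ 1 := Real.exp_le_one_iff.mpr (by linarith)
    nlinarith [Real.exp_pos a, Real.exp_pos (b - a)]
  rcases le_total b a with h | h
  · rw [abs_of_nonneg (by simpa using Real.exp_le_exp.mpr h),
      abs_of_nonneg (by linarith)]
    exact key a b ha h
  · rw [abs_sub_comm, abs_sub_comm a b,
      abs_of_nonneg (by simpa using Real.exp_le_exp.mpr h), abs_of_nonneg (by linarith)]
    exact key b a hb h

lemma aux_mgf_le {Ω : Type*} [MeasurableSpace Ω] (P : Measure Ω) [IsProbabilityMeasure P]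
    {Z : Ω → ℝ} (hm : Measurable Z) (hb : ∀ ω, |Z ω| ≤ 1)
    (h0 : ∫ ω, Z ω ∂P = 0) (t : ℝ) :
    mgf Z P t ≤ Real.exp (t ^ 2 / 2) := by
  have hZint : Integrable Z P :=
    (integrable_const (1 : ℝ)).mono' hm.aestronglyMeasurable
      (ae_of_all _ fun ω => by simpa using hb ω)
  have hpt : ∀ ω, Real.exp (t * Z ω) ≤ Real.cosh t + Real.sinh t * Z ω := by
    intro ω
    have hs := abs_le.mp (hb ω)
    have hconv := convexOn_exp.2 (Set.mem_univ (-t)) (Set.mem_univ t)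
      (show (0:ℝ) ≤ (1 - Z ω) / 2 by linarith [hs.2])
      (show (0:ℝ) ≤ (1 + Z ω) / 2 by linarith [hs.1]) (by ring)
    simp only [smul_eq_mul] at hconv
    calc Real.exp (t * Z ω) = Real.exp ((1 - Z ω) / 2 * (-t) + (1 + Z ω) / 2 * t) := by
          rw [show (1 - Z ω) / 2 * (-t) + (1 + Z ω) / 2 * t = t * Z ω by ring]
      _ ≤ (1 - Z ω) / 2 * Real.exp (-t) + (1 + Z ω) / 2 * Real.exp t := hconv
      _ = Real.cosh t + Real.sinh t * Z ω := by rw [Real.cosh_eq, Real.sinh_eq]; ring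
  have hint1 : Integrable (fun ω => Real.exp (t * Z ω)) P := by
    refine (integrable_const (Real.exp |t|)).mono'
      ((hm.const_mul t).exp).aestronglyMeasurable (ae_of_all _ fun ω => ?_)
    rw [Real.norm_eq_abs, abs_of_pos (Real.exp_pos _), Real.exp_le_exp]
    calc t * Z ω ≤ |t * Z ω| := le_abs_self _
      _ = |t| * |Z ω| := abs_mul _ _
      _ ≤ |t| * 1 := by gcongr; exact hb ω
      _ = |t| := mul_one _
  have hint2 : Integrable (fun ω => Real.cosh t + Real.sinh t * Z ω) P :=
    (integrable_const _).add (hZint.const_mul _)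
  have h1 : mgf Z P t ≤ ∫ ω, (Real.cosh t + Real.sinh t * Z ω) ∂P :=
    integral_mono hint1 hint2 hpt
  have h2 : ∫ ω, (Real.cosh t + Real.sinh t * Z ω) ∂P = Real.cosh t := by
    rw [integral_add (integrable_const _) (hZint.const_mul _), integral_const,
      integral_const_mul, h0]
    simp
  rw [h2] at h1
  exact h1.trans (Real.cosh_le_exp_half_sq t)

lemma aux_tail {Ω : Type*} [MeasureSpace Ω] [IsProbabilityMeasure (ℙ : Measure Ω)]
    {R : ℕ} {Z : Fin R → Ω → ℝ}
    (hindep : iIndepFun Z ℙ)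
    (hm : ∀ i, Measurable (Z i)) (hb : ∀ i ω, |Z i ω| ≤ 1)
    (h0 : ∀ i, ∫ ω, Z i ω = 0) {ε : ℝ} (hε : 0 < ε) :
    ℙ {ω' | (R : ℝ) * ε / 2 ≤ ∑ i, Z i ω'} ≤
      ENNReal.ofReal (Real.exp (-(R : ℝ) * ε ^ 2 / 8)) := by
  set t : ℝ := ε / 2 with ht_def
  have hint : ∀ i ∈ Finset.univ (α := Fin R),
      Integrable (fun ω => Real.exp (t * Z i ω)) ℙ := by
    intro i _
    refine (integrable_const (Real.exp |t|)).mono'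
      (((hm i).const_mul t).exp).aestronglyMeasurable (ae_of_all _ fun ω => ?_)
    rw [Real.norm_eq_abs, abs_of_pos (Real.exp_pos _), Real.exp_le_exp]
    calc t * Z i ω ≤ |t * Z i ω| := le_abs_self _
      _ = |t| * |Z i ω| := abs_mul _ _
      _ ≤ |t| * 1 := by gcongr; exact hb i ω
      _ = |t| := mul_one _
  have hsum_int : Integrable (fun ω => Real.exp (t * (∑ i, Z i) ω)) ℙ :=
    hindep.integrable_exp_mul_sum hm hint
  have hch := measure_ge_le_exp_mul_mgf (μ := ℙ) (X := ∑ i, Z i)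
    ((R : ℝ) * ε / 2) (t := t) (by positivity) hsum_int
  have hmgf : mgf (∑ i, Z i) ℙ t ≤ Real.exp ((R : ℝ) * (t ^ 2 / 2)) := by
    rw [hindep.mgf_sum hm]
    calc ∏ i, mgf (Z i) ℙ t ≤ ∏ _i : Fin R, Real.exp (t ^ 2 / 2) :=
        Finset.prod_le_prod (fun i _ => mgf_nonneg)
          (fun i _ => aux_mgf_le ℙ (hm i) (hb i) (h0 i) t)
      _ = Real.exp ((R : ℝ) * (t ^ 2 / 2)) := by
        rw [Finset.prod_const, ← Real.exp_nat_mul]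
        simp
  have hfinal : (ℙ {ω | (R : ℝ) * ε / 2 ≤ (∑ i, Z i) ω}).toReal ≤
      Real.exp (-(R : ℝ) * ε ^ 2 / 8) := by
    refine hch.trans ?_
    calc Real.exp (-t * ((R : ℝ) * ε / 2)) * mgf (∑ i, Z i) ℙ t
        ≤ Real.exp (-t * ((R : ℝ) * ε / 2)) * Real.exp ((R : ℝ) * (t ^ 2 / 2)) := by
          gcongr
      _ = Real.exp (-(R : ℝ) * ε ^ 2 / 8) := by
          rw [← Real.exp_add]; congr 1; rw [ht_def]; ring
  have hset : {ω' | (R : ℝ) * ε / 2 ≤ ∑ i, Z i ω'} =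
      {ω | (R : ℝ) * ε / 2 ≤ (∑ i, Z i) ω} := by
    ext ω; simp [Finset.sum_apply]
  rw [hset, ← ENNReal.ofReal_toReal (measure_ne_top ℙ _)]
  exact ENNReal.ofReal_le_ofReal hfinal

end Aux

noncomputable def gk (γ : ℝ) {X : Type*} [MetricSpace X] (x y ω : X) : ℝ :=
  Real.exp (-γ * (dist x ω + dist ω y))

lemma gk_nonneg (γ : ℝ) {X : Type*} [MetricSpace X] (x y ω : X) : 0 ≤ gk γ x y ω :=
  (Real.exp_pos _).le

lemma gk_le_one {γ : ℝ} (hγ : 0 ≤ γ) {X : Type*} [MetricSpace X] (x y ω : X) :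
    gk γ x y ω ≤ 1 := by
  apply Real.exp_le_one_iff.mpr
  have h1 : (0:ℝ) ≤ γ * (dist x ω + dist ω y) := by positivity
  nlinarith

lemma gk_meas (γ : ℝ) {X : Type*} [MetricSpace X] [MeasurableSpace X]
    [OpensMeasurableSpace X] (x y : X) : Measurable (gk γ x y) :=
  (Real.continuous_exp.comp (continuous_const.mul
    ((continuous_const.dist continuous_id).add
      (continuous_id.dist continuous_const)))).measurable

lemma gk_lip {γ : ℝ} (hγ : 0 < γ) {X : Type*} [MetricSpace X] (x y e e' ω : X) :
    |gk γ x y ω - gk γ e e' ω| ≤ γ * (dist x e + dist y e') := by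
  have hn1 : -γ * (dist x ω + dist ω y) ≤ 0 := by
    have h1 : (0:ℝ) ≤ γ * (dist x ω + dist ω y) := by positivity
    nlinarith
  have hn2 : -γ * (dist e ω + dist ω e') ≤ 0 := by
    have h1 : (0:ℝ) ≤ γ * (dist e ω + dist ω e') := by positivity
    nlinarith
  refine (aux_explip hn1 hn2).trans ?_
  have heq : -γ * (dist x ω + dist ω y) - -γ * (dist e ω + dist ω e') =
      -γ * ((dist x ω - dist e ω) + (dist ω y - dist ω e')) := by ring
  rw [heq, abs_mul, abs_neg, abs_of_pos hγ]
  refine mul_le_mul_of_nonneg_left ?_ hγ.le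
  calc |(dist x ω - dist e ω) + (dist ω y - dist ω e')|
      ≤ |dist x ω - dist e ω| + |dist ω y - dist ω e'| := abs_add_le _ _
    _ ≤ dist x e + dist y e' := add_le_add (abs_dist_sub_le _ _ _)
        (by rw [dist_comm ω y, dist_comm ω e']; exact abs_dist_sub_le _ _ _)

theorem stmt_15 {X : Type*} [MetricSpace X] [MeasurableSpace X] [OpensMeasurableSpace X]
    (d M : ℕ)
    (hcover : ∀ ε : ℝ, 0 < ε → ∃ E : Finset X,
      (E.card : ℝ) ≤ (1 + 2 / ε) ^ (d * M) ∧ ∀ x : X, ∃ e ∈ E, dist x e ≤ ε)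
    (μ : Measure X) [IsProbabilityMeasure μ] (γ : ℝ) (hγ : 0 < γ)
    {Ω : Type*} [MeasureSpace Ω] [IsProbabilityMeasure (ℙ : Measure Ω)]
    (R : ℕ) (W : Fin R → Ω → X) (hWmeas : ∀ i, Measurable (W i))
    (hindep : iIndepFun W ℙ)
    (hid : ∀ i, Measure.map (W i) ℙ = μ)
    (k : X → X → ℝ)
    (hk : ∀ x y, k x y = ∫ ω, Real.exp (-γ * (dist x ω + dist ω y)) ∂μ)
    (ktil : Ω → X → X → ℝ)
    (hktil : ∀ ω' x y, ktil ω' x y =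
      (1 / (R : ℝ)) * ∑ i, Real.exp (-γ * (dist x (W i ω') + dist (W i ω') y)))
    (ε : ℝ) (hε : 0 < ε) :
    ENNReal.ofReal (1 - 2 * (1 + 16 * γ / ε) ^ (2 * d * M) *
        Real.exp (-(R : ℝ) * ε ^ 2 / 8)) ≤
      ℙ {ω' | ∀ x y : X, |k x y - ktil ω' x y| ≤ ε} := by
  classical
  have hAnn : (0:ℝ) ≤ 16 * γ / ε := by positivity
  have hA1 : (1:ℝ) ≤ 1 + 16 * γ / ε := by linarith
  have hApow : (1:ℝ) ≤ (1 + 16 * γ / ε) ^ (2 * d * M) := one_le_pow₀ hA1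
  by_cases hR : R = 0
  · subst hR
    have hb : 1 - 2 * (1 + 16 * γ / ε) ^ (2 * d * M) *
        Real.exp (-((0:ℕ):ℝ) * ε ^ 2 / 8) ≤ 0 := by
      have : Real.exp (-((0:ℕ):ℝ) * ε ^ 2 / 8) = 1 := by norm_num
      rw [this]; nlinarith
    rw [ENNReal.ofReal_eq_zero.mpr hb]
    exact zero_le
  have hRpos : 0 < (R:ℝ) := by exact_mod_cast Nat.pos_of_ne_zero hR
  set t : ℝ := ε / (8 * γ) with ht_def
  have ht : 0 < t := by positivity
  obtain ⟨E, hEcard, hEcov⟩ := hcover t ht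
  have hAt : 1 + 2 / t = 1 + 16 * γ / ε := by rw [ht_def]; field_simp; ring
  rw [hAt] at hEcard
  have hk' : ∀ x y, k x y = ∫ ω, gk γ x y ω ∂μ := hk
  have hktil' : ∀ ω' x y, ktil ω' x y = (1/(R:ℝ)) * ∑ i, gk γ x y (W i ω') := hktil
  have hgint : ∀ x y : X, Integrable (gk γ x y) μ := fun x y =>
    (integrable_const (1:ℝ)).mono' (gk_meas γ x y).aestronglyMeasurable
      (ae_of_all _ fun ω => by
        rw [Real.norm_eq_abs, abs_of_nonneg (gk_nonneg _ _ _ _)]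
        exact gk_le_one hγ.le _ _ _)
  have hk01 : ∀ x y, 0 ≤ k x y ∧ k x y ≤ 1 := by
    intro x y
    rw [hk']
    refine ⟨integral_nonneg fun ω => gk_nonneg _ _ _ _, ?_⟩
    calc ∫ ω, gk γ x y ω ∂μ ≤ ∫ _ω, (1:ℝ) ∂μ :=
        integral_mono (hgint x y) (integrable_const 1) fun ω => gk_le_one hγ.le _ _ _
      _ = 1 := by simp
  have hklip : ∀ x y e e' : X, |k x y - k e e'| ≤ γ * (dist x e + dist y e') := by
    intro x y e e'
    rw [hk' x y, hk' e e', ← integral_sub (hgint x y) (hgint e e')]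
    calc |∫ ω, (gk γ x y ω - gk γ e e' ω) ∂μ|
        ≤ ∫ ω, |gk γ x y ω - gk γ e e' ω| ∂μ := by
          simpa [Real.norm_eq_abs] using
            norm_integral_le_integral_norm (μ := μ) fun ω => gk γ x y ω - gk γ e e' ω
      _ ≤ ∫ _ω, γ * (dist x e + dist y e') ∂μ :=
        integral_mono ((hgint x y).sub (hgint e e')).abs (integrable_const _)
          fun ω => gk_lip hγ x y e e' ω
      _ = γ * (dist x e + dist y e') := by simp
  have hktlip : ∀ (ω' : Ω) (x y e e' : X),
      |ktil ω' x y - ktil ω' e e'| ≤ γ * (dist x e + dist y e') := by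
    intro ω' x y e e'
    rw [hktil', hktil', ← mul_sub, ← Finset.sum_sub_distrib, abs_mul,
      abs_of_pos (by positivity : (0:ℝ) < 1/(R:ℝ))]
    have hsum : |∑ i, (gk γ x y (W i ω') - gk γ e e' (W i ω'))| ≤
        (R:ℝ) * (γ * (dist x e + dist y e')) := by
      calc |∑ i, (gk γ x y (W i ω') - gk γ e e' (W i ω'))|
          ≤ ∑ i, |gk γ x y (W i ω') - gk γ e e' (W i ω')| :=
            Finset.abs_sum_le_sum_abs _ _
        _ ≤ ∑ _i : Fin R, γ * (dist x e + dist y e') :=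
            Finset.sum_le_sum fun i _ => gk_lip hγ x y e e' (W i ω')
        _ = (R:ℝ) * (γ * (dist x e + dist y e')) := by
            rw [Finset.sum_const, Finset.card_univ, Fintype.card_fin, nsmul_eq_mul]
    calc 1/(R:ℝ) * |∑ i, (gk γ x y (W i ω') - gk γ e e' (W i ω'))|
        ≤ 1/(R:ℝ) * ((R:ℝ) * (γ * (dist x e + dist y e'))) := by
          exact mul_le_mul_of_nonneg_left hsum (by positivity)
      _ = γ * (dist x e + dist y e') := by field_simp
  -- per-pair bad event bound
  set B : X → X → Set Ω := fun e e' => {ω' | ε/2 < |k e e' - ktil ω' e e'|} with hB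
  have hBbound : ∀ e e' : X, ℙ (B e e') ≤
      ENNReal.ofReal (2 * Real.exp (-(R:ℝ) * ε ^ 2 / 8)) := by
    intro e e'
    have hgm : Measurable (gk γ e e') := gk_meas γ e e'
    set Z : Fin R → Ω → ℝ := fun i ω' => gk γ e e' (W i ω') - k e e' with hZ
    set Z' : Fin R → Ω → ℝ := fun i ω' => k e e' - gk γ e e' (W i ω') with hZ'
    have hZmeas : ∀ i, Measurable (Z i) := fun i =>
      (hgm.comp (hWmeas i)).sub measurable_const
    have hZ'meas : ∀ i, Measurable (Z' i) := fun i =>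
      measurable_const.sub (hgm.comp (hWmeas i))
    have habs : ∀ i ω', |Z i ω'| ≤ 1 := by
      intro i ω'
      have h1 := gk_nonneg γ e e' (W i ω')
      have h2 := gk_le_one hγ.le e e' (W i ω')
      have h3 := hk01 e e'
      rw [abs_le]; constructor <;> simp only [hZ] <;> [linarith [h3.2]; linarith [h3.1]]
    have habs' : ∀ i ω', |Z' i ω'| ≤ 1 := by
      intro i ω'
      have h1 := gk_nonneg γ e e' (W i ω')
      have h2 := gk_le_one hγ.le e e' (W i ω')
      have h3 := hk01 e e'
      rw [abs_le]; constructor <;> simp only [hZ'] <;> [linarith [h3.1]; linarith [h3.2]]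
    have hcomp_int : ∀ i, Integrable (fun ω' => gk γ e e' (W i ω')) ℙ := fun i =>
      (integrable_const (1:ℝ)).mono' (hgm.comp (hWmeas i)).aestronglyMeasurable
        (ae_of_all _ fun ω' => by
          rw [Real.norm_eq_abs, abs_of_nonneg (gk_nonneg _ _ _ _)]
          exact gk_le_one hγ.le _ _ _)
    have hmean : ∀ i, ∫ ω', gk γ e e' (W i ω') ∂ℙ = k e e' := by
      intro i
      rw [hk', ← hid i, integral_map (hWmeas i).aemeasurable hgm.aestronglyMeasurable]
    have hZ0 : ∀ i, ∫ ω', Z i ω' = 0 := by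
      intro i
      simp only [hZ]
      rw [integral_sub (hcomp_int i) (integrable_const _), hmean i, integral_const]
      simp
    have hZ'0 : ∀ i, ∫ ω', Z' i ω' = 0 := by
      intro i
      simp only [hZ']
      rw [integral_sub (integrable_const _) (hcomp_int i), hmean i, integral_const]
      simp
    have hZindep : iIndepFun Z ℙ := by
      have hEq : Z = fun i => (fun x => gk γ e e' x - k e e') ∘ W i := by
        funext i ω'; simp [hZ, Function.comp]
      rw [hEq]
      exact hindep.comp _ (fun _ => hgm.sub measurable_const)
    have hZ'indep : iIndepFun Z' ℙ := by
      have hEq : Z' = fun i => (fun x => k e e' - gk γ e e' x) ∘ W i := by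
        funext i ω'; simp [hZ', Function.comp]
      rw [hEq]
      exact hindep.comp _ (fun _ => measurable_const.sub hgm)
    have hT1 := aux_tail hZindep hZmeas habs hZ0 hε
    have hT2 := aux_tail hZ'indep hZ'meas habs' hZ'0 hε
    have hsub : B e e' ⊆ {ω' | (R:ℝ) * ε / 2 ≤ ∑ i, Z i ω'} ∪
        {ω' | (R:ℝ) * ε / 2 ≤ ∑ i, Z' i ω'} := by
      intro ω' hω'
      simp only [hB, Set.mem_setOf_eq] at hω'
      have hs' : ∑ i, Z' i ω' = (R:ℝ) * k e e' - ∑ i, gk γ e e' (W i ω') := by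
        simp only [hZ', Finset.sum_sub_distrib, Finset.sum_const, Finset.card_univ,
          Fintype.card_fin, nsmul_eq_mul]
      have hs : ∑ i, Z i ω' = ∑ i, gk γ e e' (W i ω') - (R:ℝ) * k e e' := by
        simp only [hZ, Finset.sum_sub_distrib, Finset.sum_const, Finset.card_univ,
          Fintype.card_fin, nsmul_eq_mul]
      have hkt : ktil ω' e e' = (1/(R:ℝ)) * ∑ i, gk γ e e' (W i ω') := hktil' ω' e e'
      have h3 : (R:ℝ) * (ε/2) < (R:ℝ) * |k e e' - ktil ω' e e'| :=
        mul_lt_mul_of_pos_left hω' hRpos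
      have h4 : (R:ℝ) * |k e e' - ktil ω' e e'| =
          |(R:ℝ) * k e e' - ∑ i, gk γ e e' (W i ω')| := by
        rw [show (R:ℝ) = |(R:ℝ)| from (abs_of_pos hRpos).symm, ← abs_mul]
        congr 1
        rw [hkt]
        field_simp
        rw [abs_of_pos hRpos]
        ring
      rw [h4] at h3
      rcases le_abs.mp h3.le with h | h
      · right
        simp only [Set.mem_setOf_eq]
        rw [hs']
        linarith
      · left
        simp only [Set.mem_setOf_eq]
        rw [hs]
        linarith
    calc ℙ (B e e') ≤ ℙ ({ω' | (R:ℝ) * ε / 2 ≤ ∑ i, Z i ω'} ∪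
          {ω' | (R:ℝ) * ε / 2 ≤ ∑ i, Z' i ω'}) := measure_mono hsub
      _ ≤ ℙ {ω' | (R:ℝ) * ε / 2 ≤ ∑ i, Z i ω'} +
          ℙ {ω' | (R:ℝ) * ε / 2 ≤ ∑ i, Z' i ω'} := measure_union_le _ _
      _ ≤ ENNReal.ofReal (Real.exp (-(R:ℝ) * ε ^ 2 / 8)) +
          ENNReal.ofReal (Real.exp (-(R:ℝ) * ε ^ 2 / 8)) := add_le_add hT1 hT2
      _ = ENNReal.ofReal (2 * Real.exp (-(R:ℝ) * ε ^ 2 / 8)) := by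
          rw [← ENNReal.ofReal_add (Real.exp_pos _).le (Real.exp_pos _).le]
          congr 1; ring
  -- union bound
  set U : Set Ω := ⋃ p ∈ E ×ˢ E, B p.1 p.2 with hU
  have hUbound : ℙ U ≤ ENNReal.ofReal (2 * (1 + 16 * γ / ε) ^ (2 * d * M) *
      Real.exp (-(R:ℝ) * ε ^ 2 / 8)) := by
    have hcard2 : (((E ×ˢ E).card : ℝ)) ≤ (1 + 16 * γ / ε) ^ (2 * d * M) := by
      rw [Finset.card_product, Nat.cast_mul]
      have h0 : (0:ℝ) ≤ (E.card : ℝ) := Nat.cast_nonneg _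
      calc (E.card : ℝ) * (E.card : ℝ)
          ≤ (1 + 16 * γ / ε) ^ (d * M) * (1 + 16 * γ / ε) ^ (d * M) :=
            mul_le_mul hEcard hEcard h0 (h0.trans hEcard)
        _ = (1 + 16 * γ / ε) ^ (2 * d * M) := by
            rw [← pow_add]; congr 1; ring
    calc ℙ U ≤ ∑ p ∈ E ×ˢ E, ℙ (B p.1 p.2) := measure_biUnion_finset_le _ _
      _ ≤ ∑ _p ∈ E ×ˢ E, ENNReal.ofReal (2 * Real.exp (-(R:ℝ) * ε ^ 2 / 8)) :=
          Finset.sum_le_sum fun p _ => hBbound p.1 p.2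
      _ = ((E ×ˢ E).card : ℝ≥0∞) * ENNReal.ofReal (2 * Real.exp (-(R:ℝ) * ε ^ 2 / 8)) := by
          rw [Finset.sum_const, nsmul_eq_mul]
      _ ≤ ENNReal.ofReal (2 * (1 + 16 * γ / ε) ^ (2 * d * M) *
          Real.exp (-(R:ℝ) * ε ^ 2 / 8)) := by
          rw [← ENNReal.ofReal_natCast, ← ENNReal.ofReal_mul (Nat.cast_nonneg _)]
          apply ENNReal.ofReal_le_ofReal
          nlinarith [Real.exp_pos (-(R:ℝ) * ε ^ 2 / 8)]
  -- good event inclusion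
  have hgood : Uᶜ ⊆ {ω' | ∀ x y : X, |k x y - ktil ω' x y| ≤ ε} := by
    intro ω' hω' x y
    simp only [hU, Set.mem_compl_iff, Set.mem_iUnion, not_exists] at hω'
    obtain ⟨e, he, hxe⟩ := hEcov x
    obtain ⟨e', he', hye⟩ := hEcov y
    have hmem : ω' ∉ B e e' := hω' (e, e') (Finset.mem_product.mpr ⟨he, he'⟩)
    have hb2 : |k e e' - ktil ω' e e'| ≤ ε/2 := by
      by_contra hcon
      exact hmem (by simp only [hB, Set.mem_setOf_eq]; linarith [lt_of_not_ge hcon])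
    have hd : γ * (dist x e + dist y e') ≤ ε/4 := by
      have hle : dist x e + dist y e' ≤ t + t := add_le_add hxe hye
      calc γ * (dist x e + dist y e') ≤ γ * (t + t) :=
          mul_le_mul_of_nonneg_left hle hγ.le
        _ = ε/4 := by rw [ht_def]; field_simp; ring
    have h1 := (hklip x y e e').trans hd
    have h2 := (hktlip ω' x y e e').trans hd
    have ha : |k x y - ktil ω' x y| ≤ |k x y - k e e'| + |k e e' - ktil ω' x y| :=
      abs_sub_le _ _ _
    have hb' : |k e e' - ktil ω' x y| ≤ |k e e' - ktil ω' e e'| +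
        |ktil ω' e e' - ktil ω' x y| := abs_sub_le _ _ _
    have h2' : |ktil ω' e e' - ktil ω' x y| ≤ ε/4 := by
      rw [abs_sub_comm]; exact h2
    linarith
  -- final chain
  have hle1 : (1:ℝ≥0∞) ≤ ℙ Uᶜ + ℙ U := by
    calc (1:ℝ≥0∞) = ℙ (Uᶜ ∪ U) := by rw [Set.compl_union_self, measure_univ]
      _ ≤ ℙ Uᶜ + ℙ U := measure_union_le _ _
  calc ENNReal.ofReal (1 - 2 * (1 + 16 * γ / ε) ^ (2 * d * M) *
        Real.exp (-(R:ℝ) * ε ^ 2 / 8))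
      = 1 - ENNReal.ofReal (2 * (1 + 16 * γ / ε) ^ (2 * d * M) *
        Real.exp (-(R:ℝ) * ε ^ 2 / 8)) := by
        rw [ENNReal.ofReal_sub _ (by positivity), ENNReal.ofReal_one]
    _ ≤ 1 - ℙ U := tsub_le_tsub_left hUbound 1
    _ ≤ ℙ Uᶜ := tsub_le_iff_right.mpr hle1
    _ ≤ ℙ {ω' | ∀ x y : X, |k x y - ktil ω' x y| ≤ ε} := measure_mono hgood
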